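/- Let F, t*, f(t*), F̄, ε̄ be as follows: 0 < F(t*) < 1, F differentiable at t* with derivative f(t*) > 0, F̄ = 1 − F, ε̄ = f(t*)/F̄(t*). Let (c_n), (l_n) be positive integers with c_n → ∞, l_n → ∞, c_n·F̄(t*)^{l_n} → 1. For each n let T^{(n)}_{i,j} (1 ≤ i ≤ c_n, 1 ≤ j ≤ l_n) be i.i.d. with distribution function F, and fix a real t. Let N_n be the number of row indices i ≤ c_n such that min_{1≤j≤l_n} T^{(n)}_{i,j} > t* + t/l_n. Then for every nonnegative integer k, P(N_n = k) converges, as n → ∞, to e^{−λ} λ^k / k! where λ = exp(−ε̄ t). (The number of scaled row minima exceeding the level t converges in distribution to a Poisson random variable with mean exp(−ε̄ t).) -/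

import Mathlib

open MeasureTheory ProbabilityTheory Filter
open scoped ENNReal

/-- auxiliary: `log(1+u)/u`, patched to `1` at `u = 0`. -/
noncomputable def glogAux (u : ℝ) : ℝ := if u = 0 then 1 else Real.log (1 + u) / u

lemma glogAux_eq (u : ℝ) : Real.log (1 + u) = u * glogAux u := by
  unfold glogAux
  by_cases h : u = 0
  · simp [h]
  · rw [if_neg h]; field_simp

lemma glogAux_tendsto : Tendsto glogAux (nhds 0) (nhds 1) := by
  have hd : HasDerivAt (fun u : ℝ => Real.log (1 + u)) 1 0 := by
    have h1 : HasDerivAt (fun u : ℝ => 1 + u) 1 0 := by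
      simpa using (hasDerivAt_id (0 : ℝ)).const_add (1 : ℝ)
    have := h1.log (by norm_num)
    simpa using this
  have hslope := hasDerivAt_iff_tendsto_slope.mp hd
  rw [← nhdsNE_sup_pure (0 : ℝ)]
  refine tendsto_sup.mpr ⟨?_, ?_⟩
  · refine hslope.congr' ?_
    filter_upwards [self_mem_nhdsWithin] with u hu
    have hu' : u ≠ 0 := hu
    simp [slope, glogAux, hu', Real.log_one, sub_zero, inv_mul_eq_div]
  · have : glogAux 0 = 1 := by simp [glogAux]
    rw [← this]
    exact tendsto_pure_nhds glogAux 0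
lemma binom_poisson_limit (lam : ℝ) (c : ℕ → ℕ) (p : ℕ → ℝ)
    (hc : Tendsto c atTop atTop) (hp0 : ∀ n, 0 ≤ p n) (hp1 : ∀ n, p n ≤ 1)
    (hcp : Tendsto (fun n => (c n : ℝ) * p n) atTop (nhds lam)) (k : ℕ) :
    Tendsto (fun n => ((c n).choose k : ℝ) * p n ^ k * (1 - p n) ^ (c n - k)) atTop
      (nhds (Real.exp (-lam) * lam ^ k / Nat.factorial k)) := by
  -- c n → ∞ in ℝ
  have hcR : Tendsto (fun n => (c n : ℝ)) atTop atTop :=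
    tendsto_natCast_atTop_atTop.comp hc
  -- p n → 0
  have hp_zero : Tendsto p atTop (nhds 0) := by
    have h1 : Tendsto (fun n => ((c n : ℝ) * p n) * (c n : ℝ)⁻¹) atTop (nhds (lam * 0)) :=
      hcp.mul hcR.inv_tendsto_atTop
    rw [mul_zero] at h1
    refine h1.congr' ?_
    filter_upwards [hc.eventually_ge_atTop 1] with n hn
    have hcn : (c n : ℝ) ≠ 0 := by positivity
    field_simp
  -- eventually p n < 1
  have hp_lt : ∀ᶠ n in atTop, p n < 1 := by
    have := hp_zero.eventually (eventually_lt_nhds (by norm_num : (0:ℝ) < 1))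
    filter_upwards [this] with n hn using hn
  have hck : ∀ᶠ n in atTop, k ≤ c n := hc.eventually_ge_atTop k
  -- first factor: choose * p^k → lam^k / k!
  have hfact : Tendsto (fun n => ((c n).choose k : ℝ) * p n ^ k) atTop
      (nhds (lam ^ k / Nat.factorial k)) := by
    have hprod : Tendsto (fun n => ∏ j ∈ Finset.range k, (((c n : ℝ) - j) * p n)) atTop
        (nhds (lam ^ k)) := by
      have : Tendsto (fun n => ∏ j ∈ Finset.range k, (((c n : ℝ) - j) * p n)) atTop
          (nhds (∏ _j ∈ Finset.range k, lam)) := by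
        refine tendsto_finset_prod _ fun j _ => ?_
        have : Tendsto (fun n => (c n : ℝ) * p n - (j : ℝ) * p n) atTop (nhds (lam - (j:ℝ)*0)) :=
          hcp.sub ((tendsto_const_nhds).mul hp_zero)
        rw [mul_zero, sub_zero] at this
        refine this.congr fun n => by ring
      simpa using this
    have heq : ∀ᶠ n in atTop, ((c n).choose k : ℝ) * p n ^ k
        = (∏ j ∈ Finset.range k, (((c n : ℝ) - j) * p n)) / Nat.factorial k := by
      filter_upwards [hck] with n hn
      have hdesc : ((c n).descFactorial k : ℝ) = ∏ j ∈ Finset.range k, ((c n : ℝ) - j) := by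
        rw [Nat.descFactorial_eq_prod_range, Nat.cast_prod]
        refine Finset.prod_congr rfl fun j hj => ?_
        have : j ≤ c n := le_trans (le_of_lt (Finset.mem_range.mp hj)) hn
        push_cast [Nat.cast_sub this]
        ring
      have hchoose : ((c n).choose k : ℝ) = ((c n).descFactorial k : ℝ) / Nat.factorial k := by
        have := Nat.descFactorial_eq_factorial_mul_choose (c n) k
        have h2 : ((c n).descFactorial k : ℝ) = (Nat.factorial k : ℝ) * ((c n).choose k : ℝ) := by
          exact_mod_cast congrArg (Nat.cast : ℕ → ℝ) this
        rw [h2]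
        field_simp
      rw [hchoose, hdesc, Finset.prod_mul_distrib, Finset.prod_const, Finset.card_range]
      ring
    refine Tendsto.congr' ?_ (hprod.div_const _)
    filter_upwards [heq] with n h
    exact h.symm
  -- second factor: (1-p)^(c-k) → exp(-lam)
  have hexp : Tendsto (fun n => (1 - p n) ^ (c n - k)) atTop (nhds (Real.exp (-lam))) := by
    have hlog : Tendsto (fun n => ((c n : ℝ) - k) * Real.log (1 - p n)) atTop (nhds (-lam)) := by
      have hg : Tendsto (fun n => glogAux (-p n)) atTop (nhds 1) :=
        glogAux_tendsto.comp (by simpa using hp_zero.neg)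
      have h1 : Tendsto (fun n => (c n : ℝ) * Real.log (1 - p n)) atTop (nhds (-lam)) := by
        have : Tendsto (fun n => -((c n : ℝ) * p n) * glogAux (-p n)) atTop
            (nhds (-lam * 1)) := (hcp.neg).mul hg
        rw [mul_one] at this
        refine this.congr fun n => ?_
        have : Real.log (1 - p n) = (-p n) * glogAux (-p n) := by
          have := glogAux_eq (-p n); rwa [show (1 : ℝ) + -p n = 1 - p n by ring] at this
        rw [this]; ring
      have h2 : Tendsto (fun n => (k : ℝ) * Real.log (1 - p n)) atTop (nhds 0) := by
        have hlog1 : Tendsto (fun n => Real.log (1 - p n)) atTop (nhds 0) := by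
          have hc1 : ContinuousAt Real.log 1 := Real.continuousAt_log (by norm_num)
          have : Tendsto (fun n => (1 : ℝ) - p n) atTop (nhds 1) := by
            simpa using (tendsto_const_nhds (x := (1:ℝ))).sub hp_zero
          simpa [Real.log_one, Function.comp_def] using hc1.tendsto.comp this
        simpa using (tendsto_const_nhds (x := (k:ℝ))).mul hlog1
      have := h1.sub h2
      rw [sub_zero] at this
      refine this.congr fun n => by ring
    have hev : ∀ᶠ n in atTop, (1 - p n) ^ (c n - k)
        = Real.exp (((c n : ℝ) - k) * Real.log (1 - p n)) := by
      filter_upwards [hp_lt, hck] with n hn hkn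
      have hpos : 0 < 1 - p n := by linarith
      have hcast : ((c n - k : ℕ) : ℝ) = (c n : ℝ) - k := Nat.cast_sub hkn
      rw [← hcast, ← Real.log_pow, Real.exp_log (pow_pos hpos _)]
    refine Tendsto.congr' ?_ (Real.continuous_exp.continuousAt.tendsto.comp hlog)
    filter_upwards [hev] with n h
    exact h.symm
  have hval : Real.exp (-lam) * lam ^ k / Nat.factorial k
      = lam ^ k / Nat.factorial k * Real.exp (-lam) := by ring
  rw [hval]
  exact hfact.mul hexp
lemma iIndep_mono' {Ω ι : Type*} {mΩ : MeasurableSpace Ω} {P : Measure Ω}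
    {m m' : ι → MeasurableSpace Ω} (h : ∀ i, m i ≤ m' i) (h' : iIndep m' P) :
    iIndep m P := by
  rw [iIndep_iff] at h' ⊢
  intro s f hf
  exact h' s (fun i hi => h i _ (hf i hi))

lemma binom_measure {Ω : Type*} [MeasurableSpace Ω] (P : Measure Ω) [IsProbabilityMeasure P]
    {c : ℕ} (A : Fin c → Set Ω) (hAm : ∀ i, MeasurableSet (A i))
    (hind : iIndep (fun i => MeasurableSpace.generateFrom {A i}) P)
    (pe : ℝ≥0∞) (hA : ∀ i, P (A i) = pe) (k : ℕ) :
    P {ω | Set.ncard {i | ω ∈ A i} = k}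
      = (c.choose k : ℝ≥0∞) * pe ^ k * (1 - pe) ^ (c - k) := by
  classical
  set E : Finset (Fin c) → Set Ω :=
    fun S => ⋂ i, (if i ∈ S then A i else (A i)ᶜ) with hE
  have hmem : ∀ (ω : Ω) (S : Finset (Fin c)), ω ∈ E S ↔ ∀ i, (ω ∈ A i ↔ i ∈ S) := by
    intro ω S
    simp only [hE, Set.mem_iInter]
    constructor
    · intro h i
      have := h i
      by_cases hi : i ∈ S
      · simp [hi] at this; tauto
      · simp [hi] at this; tauto
    · intro h i
      by_cases hi : i ∈ S
      · simp [hi, (h i).mpr hi]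
      · rw [if_neg hi]
        intro hA'
        exact hi ((h i).mp hA')
  have hset : {ω | Set.ncard {i | ω ∈ A i} = k}
      = ⋃ S ∈ Finset.univ.powersetCard k, E S := by
    ext ω
    simp only [Set.mem_setOf_eq, Set.mem_iUnion, Finset.mem_powersetCard]
    constructor
    · intro h
      refine ⟨Set.toFinset {i | ω ∈ A i}, ⟨Finset.subset_univ _, ?_⟩, ?_⟩
      · rw [← Set.ncard_eq_toFinset_card']; exact h
      · rw [hmem]; intro i; simp
    · rintro ⟨S, ⟨-, hcard⟩, hωS⟩
      have : {i | ω ∈ A i} = ↑S := by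
        ext i; exact (hmem ω S).mp hωS i
      rw [this, Set.ncard_coe_finset]; exact hcard
  have hEmeas : ∀ S, MeasurableSet (E S) := by
    intro S
    refine MeasurableSet.iInter fun i => ?_
    by_cases hi : i ∈ S
    · simpa [hi] using hAm i
    · simpa [hi] using (hAm i).compl
  have hdisj : ((Finset.univ.powersetCard k : Finset (Finset (Fin c))) : Set (Finset (Fin c))).PairwiseDisjoint E := by
    intro S hS S' hS' hne
    refine Set.disjoint_left.mpr fun ω hω hω' => hne ?_
    refine Finset.ext fun i => ?_
    rw [← (hmem ω S).mp hω i, (hmem ω S').mp hω' i]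
  have hPE : ∀ S : Finset (Fin c), P (E S) = pe ^ S.card * (1 - pe) ^ (c - S.card) := by
    intro S
    have hmeasgen : ∀ i, MeasurableSet[MeasurableSpace.generateFrom {A i}]
        (if i ∈ S then A i else (A i)ᶜ) := by
      intro i
      by_cases hi : i ∈ S
      · simpa [hi] using MeasurableSpace.measurableSet_generateFrom (Set.mem_singleton _)
      · simpa [hi] using (MeasurableSpace.measurableSet_generateFrom
          (Set.mem_singleton (A i))).compl
    rw [hE]
    rw [hind.meas_iInter hmeasgen]
    have hPite : ∀ i, P (if i ∈ S then A i else (A i)ᶜ)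
        = if i ∈ S then pe else 1 - pe := by
      intro i
      by_cases hi : i ∈ S
      · simp [hi, hA i]
      · simp only [hi, if_neg, if_false]
        rw [measure_compl (hAm i) (measure_ne_top P _), hA i, measure_univ]
    rw [Finset.prod_congr rfl fun i _ => hPite i]
    rw [Finset.prod_ite, Finset.prod_const, Finset.prod_const]
    have h1 : Finset.univ.filter (fun i => i ∈ S) = S := by
      ext i; simp
    have h2 : Finset.univ.filter (fun i => ¬ i ∈ S) = Sᶜ := by
      ext i; simp
    rw [h1, h2, Finset.card_compl, Fintype.card_fin]
  rw [hset, measure_biUnion_finset hdisj fun S _ => hEmeas S]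
  have : ∀ S ∈ Finset.univ.powersetCard k,
      P (E S) = pe ^ k * (1 - pe) ^ (c - k) := by
    intro S hS
    rw [hPE S, (Finset.mem_powersetCard.mp hS).2]
  rw [Finset.sum_congr rfl this, Finset.sum_const, Finset.card_powersetCard,
    Finset.card_univ, Fintype.card_fin, nsmul_eq_mul, mul_assoc]
/-- Poisson limit for the number of scaled row minima exceeding a level: for
`cₙ × lₙ` matrices of i.i.d. entries with distribution function `F`
differentiable at `t*` (`0 < F t* < 1`, `f t* > 0`), under the geometric
coupling `cₙ (1 - F t*)^{lₙ} → 1`, the number `Nₙ` of rows `i` whose minimum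
exceeds `t* + t/lₙ` satisfies `P(Nₙ = k) → e^{-λ} λ^k / k!` with
`λ = exp (-ε̄ t)`, `ε̄ = f t*/(1 - F t*)`. -/
theorem row_minima_count_poisson_limit
    {Ω : Type*} [MeasurableSpace Ω] (P : Measure Ω) [IsProbabilityMeasure P]
    (F : ℝ → ℝ) (tstar fstar : ℝ)
    (h0 : 0 < F tstar) (h1 : F tstar < 1) (hf : 0 < fstar)
    (hd : HasDerivAt F fstar tstar)
    (c l : ℕ → ℕ) (hcpos : ∀ n, 0 < c n) (hlpos : ∀ n, 0 < l n)
    (hc : Tendsto c atTop atTop) (hl : Tendsto l atTop atTop)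
    (hcouple : Tendsto (fun n => (c n : ℝ) * (1 - F tstar) ^ l n) atTop (nhds 1))
    (T : (n : ℕ) → Fin (c n) → Fin (l n) → Ω → ℝ)
    (hmeas : ∀ n i j, Measurable (T n i j))
    (hindep : ∀ n, iIndepFun
      (fun p : Fin (c n) × Fin (l n) => T n p.1 p.2) P)
    (hF : ∀ n i j t, (P {ω | T n i j ω ≤ t}).toReal = F t)
    (t : ℝ) (k : ℕ) :
    Tendsto
      (fun n => (P {ω | Set.ncard {i : Fin (c n) | tstar + t / l n <
          Finset.univ.inf' (Finset.univ_nonempty_iff.mpr (Fin.pos_iff_nonempty.mp (hlpos n)))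
            fun j => T n i j ω} = k}).toReal)
      atTop
      (nhds (Real.exp (-Real.exp (-(fstar / (1 - F tstar)) * t)) *
        Real.exp (-(fstar / (1 - F tstar)) * t) ^ k / Nat.factorial k)) := by
  classical
  -- F takes values in [0,1]
  have hF01 : ∀ x : ℝ, 0 ≤ F x ∧ F x ≤ 1 := by
    intro x
    have i0 : Fin (c 0) := ⟨0, hcpos 0⟩
    have j0 : Fin (l 0) := ⟨0, hlpos 0⟩
    constructor
    · rw [← hF 0 i0 j0 x]; exact ENNReal.toReal_nonneg
    · rw [← hF 0 i0 j0 x]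
      have h := prob_le_one (μ := P) (s := {ω | T 0 i0 j0 ω ≤ x})
      have := ENNReal.toReal_mono (by simp) h
      simpa using this
  set pfun : ℕ → ℝ := fun n => (1 - F (tstar + t / l n)) ^ l n with hpfun
  have hp0 : ∀ n, 0 ≤ pfun n := fun n => pow_nonneg (by linarith [(hF01 (tstar + t / l n)).2]) _
  have hp1 : ∀ n, pfun n ≤ 1 :=
    fun n => pow_le_one₀ (by linarith [(hF01 (tstar + t / l n)).2])
      (by linarith [(hF01 (tstar + t / l n)).1])
  -- exact binomial formula for each n
  have key : ∀ n, (P {ω | Set.ncard {i : Fin (c n) | tstar + t / l n <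
          Finset.univ.inf' (Finset.univ_nonempty_iff.mpr (Fin.pos_iff_nonempty.mp (hlpos n)))
            fun j => T n i j ω} = k}).toReal
      = ((c n).choose k : ℝ) * pfun n ^ k * (1 - pfun n) ^ (c n - k) := by
    intro n
    set sn : ℝ := tstar + t / l n with hsn
    have hsn0 : 0 ≤ 1 - F sn := by linarith [(hF01 sn).2]
    set Bset : Fin (c n) × Fin (l n) → Set Ω := fun p => T n p.1 p.2 ⁻¹' Set.Ioi sn with hBset
    have hBM : ∀ p, MeasurableSet (Bset p) := fun p => (hmeas n p.1 p.2) measurableSet_Ioi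
    have hPB : ∀ p, P (Bset p) = ENNReal.ofReal (1 - F sn) := by
      intro p
      have hcompl : Bset p = {ω | T n p.1 p.2 ω ≤ sn}ᶜ := by
        ext ω; simp [hBset, not_le]
      have hmIic : MeasurableSet {ω | T n p.1 p.2 ω ≤ sn} := hmeas n p.1 p.2 measurableSet_Iic
      have hPle : P {ω | T n p.1 p.2 ω ≤ sn} = ENNReal.ofReal (F sn) := by
        rw [← hF n p.1 p.2 sn, ENNReal.ofReal_toReal (measure_ne_top P _)]
      rw [hcompl, measure_compl hmIic (measure_ne_top P _), measure_univ, hPle,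
        ← ENNReal.ofReal_one, ← ENNReal.ofReal_sub _ (hF01 sn).1]
    have hQ : ∀ Q : Finset (Fin (c n) × Fin (l n)),
        P (⋂ p ∈ Q, Bset p) = ENNReal.ofReal (1 - F sn) ^ Q.card := by
      intro Q
      rw [(hindep n).meas_biInter (fun p _ => ⟨Set.Ioi sn, measurableSet_Ioi, rfl⟩)]
      rw [Finset.prod_congr rfl (fun p _ => hPB p), Finset.prod_const]
    set A : Fin (c n) → Set Ω := fun i => ⋂ j, Bset (i, j) with hA
    have hAprod : ∀ i, A i = ⋂ p ∈ ({i} ×ˢ (Finset.univ : Finset (Fin (l n)))), Bset p := by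
      intro i
      ext ω
      simp only [hA, Set.mem_iInter, Finset.mem_product, Finset.mem_singleton,
        Finset.mem_univ, and_true]
      constructor
      · rintro h ⟨a, b⟩ hp
        cases hp
        exact h b
      · intro h j
        exact h (i, j) rfl
    have hPA : ∀ i, P (A i) = ENNReal.ofReal (pfun n) := by
      intro i
      rw [hAprod i, hQ]
      rw [Finset.card_product, Finset.card_singleton, Finset.card_univ, Fintype.card_fin,
        one_mul, ← ENNReal.ofReal_pow hsn0]
    have hAmeas : ∀ i, MeasurableSet (A i) := fun i => MeasurableSet.iInter fun j => hBM (i, j)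
    set π : Fin (c n) → Set (Set Ω) :=
      fun i => {u | ∃ J : Finset (Fin (l n)), u = ⋂ j ∈ J, Bset (i, j)} with hπ
    have hAπ : ∀ i, A i ∈ π i := by
      intro i
      refine ⟨Finset.univ, ?_⟩
      ext ω
      simp [hA]
    have h_pi : ∀ i, IsPiSystem (π i) := by
      rintro i u ⟨J, rfl⟩ v ⟨J', rfl⟩ -
      refine ⟨J ∪ J', ?_⟩
      ext ω
      simp only [Set.mem_inter_iff, Set.mem_iInter, Finset.mem_union]
      constructor
      · rintro ⟨h1', h2'⟩ j hj
        rcases hj with hj | hj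
        · exact h1' j hj
        · exact h2' j hj
      · intro h
        exact ⟨fun j hj => h j (Or.inl hj), fun j hj => h j (Or.inr hj)⟩
    have h_le : ∀ i, MeasurableSpace.generateFrom (π i) ≤ ‹MeasurableSpace Ω› := by
      intro i
      refine MeasurableSpace.generateFrom_le ?_
      rintro u ⟨J, rfl⟩
      exact MeasurableSet.biInter J.countable_toSet fun j _ => hBM (i, j)
    have hIndepSets : iIndepSets π P := by
      rw [iIndepSets_iff]
      intro S f hf
      have hJ : ∀ i, ∃ J : Finset (Fin (l n)), i ∈ S → f i = ⋂ j ∈ J, Bset (i, j) := by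
        intro i
        by_cases hi : i ∈ S
        · obtain ⟨J, hJ⟩ := hf i hi
          exact ⟨J, fun _ => hJ⟩
        · exact ⟨∅, fun h => absurd h hi⟩
      choose J hJ using hJ
      set Q : Finset (Fin (c n) × Fin (l n)) :=
        S.biUnion (fun i => {i} ×ˢ J i) with hQdef
      have hinter : ⋂ i ∈ S, f i = ⋂ p ∈ Q, Bset p := by
        ext ω
        simp only [Set.mem_iInter, hQdef, Finset.mem_biUnion, Finset.mem_product,
          Finset.mem_singleton]
        constructor
        · rintro h ⟨a, b⟩ ⟨i, hi, rfl, hb⟩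
          have := h a hi
          rw [hJ a hi] at this
          simp only [Set.mem_iInter] at this
          exact this b hb
        · intro h i hi
          rw [hJ i hi]
          simp only [Set.mem_iInter]
          intro j hj
          exact h (i, j) ⟨i, hi, rfl, hj⟩
      have hcardQ : Q.card = ∑ i ∈ S, (J i).card := by
        rw [hQdef, Finset.card_biUnion]
        · refine Finset.sum_congr rfl fun i _ => ?_
          rw [Finset.card_product, Finset.card_singleton, one_mul]
        · intro i _ i' _ hne
          refine Finset.disjoint_left.mpr ?_
          rintro ⟨a, b⟩ hp hp'
          simp only [Finset.mem_product, Finset.mem_singleton] at hp hp'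
          exact hne (hp.1 ▸ hp'.1 ▸ rfl)
      have hPf : ∀ i ∈ S, P (f i) = ENNReal.ofReal (1 - F sn) ^ (J i).card := by
        intro i hi
        have : f i = ⋂ p ∈ ({i} ×ˢ J i), Bset p := by
          rw [hJ i hi]
          ext ω
          simp only [Set.mem_iInter, Finset.mem_product, Finset.mem_singleton]
          constructor
          · rintro h ⟨a, b⟩ ⟨rfl, hb⟩
            exact h b hb
          · intro h j hj
            exact h (i, j) ⟨rfl, hj⟩
        rw [this, hQ, Finset.card_product, Finset.card_singleton, one_mul]
      rw [hinter, hQ, Finset.prod_congr rfl hPf, Finset.prod_pow_eq_pow_sum, hcardQ]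
    have hiIndep' : iIndep (fun i => MeasurableSpace.generateFrom (π i)) P :=
      ProbabilityTheory.iIndepSets.iIndep (m := fun i => MeasurableSpace.generateFrom (π i))
        h_le π h_pi (fun _ => rfl) hIndepSets
    have hiIndepA : iIndep (fun i => MeasurableSpace.generateFrom {A i}) P := by
      refine iIndep_mono' (fun i => MeasurableSpace.generateFrom_le ?_) hiIndep'
      intro u hu
      rw [Set.mem_singleton_iff] at hu
      subst hu
      exact MeasurableSpace.measurableSet_generateFrom (hAπ i)
    have hbinom := binom_measure P A hAmeas hiIndepA (ENNReal.ofReal (pfun n)) hPA k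
    have hseteq : {ω | Set.ncard {i : Fin (c n) | tstar + t / l n <
          Finset.univ.inf' (Finset.univ_nonempty_iff.mpr (Fin.pos_iff_nonempty.mp (hlpos n)))
            fun j => T n i j ω} = k} = {ω | Set.ncard {i | ω ∈ A i} = k} := by
      ext ω
      simp only [Set.mem_setOf_eq]
      have : ∀ i : Fin (c n), (tstar + t / l n <
          Finset.univ.inf' (Finset.univ_nonempty_iff.mpr (Fin.pos_iff_nonempty.mp (hlpos n)))
            fun j => T n i j ω) ↔ ω ∈ A i := by
        intro i
        rw [Finset.lt_inf'_iff]
        simp only [hA, Set.mem_iInter, hBset, Set.mem_preimage, Set.mem_Ioi, Finset.mem_univ,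
          forall_true_left, hsn]
      simp_rw [this]
    rw [hseteq, hbinom]
    have hone : (1 : ℝ≥0∞) - ENNReal.ofReal (pfun n) = ENNReal.ofReal (1 - pfun n) := by
      rw [← ENNReal.ofReal_one, ← ENNReal.ofReal_sub _ (hp0 n)]
    rw [hone]
    rw [ENNReal.toReal_mul, ENNReal.toReal_mul, ENNReal.toReal_pow, ENNReal.toReal_pow,
      ENNReal.toReal_ofReal (hp0 n),
      ENNReal.toReal_ofReal (show (0:ℝ) ≤ 1 - pfun n by linarith [hp1 n])]
    simp
  -- the limit
  have hlimit : Tendsto (fun n => (c n : ℝ) * pfun n) atTop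
      (nhds (Real.exp (-(fstar / (1 - F tstar)) * t))) := by
    set L : ℝ := -(fstar / (1 - F tstar)) * t with hL
    have hFt1 : (0:ℝ) < 1 - F tstar := by linarith
    set u : ℕ → ℝ := fun n => (F tstar - F (tstar + t / l n)) / (1 - F tstar) with hu
    have hlR : Tendsto (fun n => (l n : ℝ)) atTop atTop := tendsto_natCast_atTop_atTop.comp hl
    have hlne : ∀ n, (l n : ℝ) ≠ 0 := fun n => Nat.cast_ne_zero.mpr (hlpos n).ne'
    have hlu : Tendsto (fun n => (l n : ℝ) * u n) atTop (nhds L) := by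
      by_cases ht : t = 0
      · have hu_eq : ∀ n, u n = 0 := by
          intro n
          simp [hu, ht]
        have hL0 : L = 0 := by rw [hL, ht]; ring
        rw [hL0]
        refine tendsto_const_nhds.congr fun n => ?_
        rw [hu_eq n, mul_zero]
      · have hslope := hasDerivAt_iff_tendsto_slope.mp hd
        have hs'tendsto : Tendsto (fun n => tstar + t / l n) atTop (nhds tstar) := by
          have h2 : Tendsto (fun n => t * (l n : ℝ)⁻¹) atTop (nhds 0) := by
            simpa using (tendsto_const_nhds (x := t)).mul hlR.inv_tendsto_atTop
          have := (tendsto_const_nhds (x := tstar)).add h2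
          rw [add_zero] at this
          refine this.congr fun n => ?_
          rw [div_eq_mul_inv]
        have hs'mem : ∀ᶠ n in atTop, tstar + t / l n ∈ ({tstar}ᶜ : Set ℝ) := by
          refine Eventually.of_forall fun n => ?_
          simp only [Set.mem_compl_iff, Set.mem_singleton_iff]
          intro habs
          have : t / l n = 0 := by linarith
          exact ht ((div_eq_zero_iff.mp this).resolve_right (hlne n))
        have hs' : Tendsto (fun n => tstar + t / l n) atTop (nhdsWithin tstar ({tstar}ᶜ)) :=
          tendsto_nhdsWithin_of_tendsto_nhds_of_eventually_within _ hs'tendsto hs'mem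
        have hcomp := hslope.comp hs'
        have hmul := hcomp.mul (tendsto_const_nhds (x := -t / (1 - F tstar)))
        have hLval : fstar * (-t / (1 - F tstar)) = L := by
          rw [hL]; field_simp
        rw [hLval] at hmul
        refine hmul.congr fun n => ?_
        simp only [Function.comp_apply, slope, vsub_eq_sub, smul_eq_mul, hu]
        have harg : tstar + t / l n - tstar = t / l n := by ring
        rw [harg]
        field_simp
        ring
    have hu0 : Tendsto u atTop (nhds 0) := by
      have h2 := hlu.mul hlR.inv_tendsto_atTop
      rw [mul_zero] at h2
      refine h2.congr fun n => ?_
      show (l n : ℝ) * u n / (l n : ℝ) = u n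
      exact mul_div_cancel_left₀ (u n) (hlne n)
    have hq_ev : ∀ᶠ n in atTop, (0:ℝ) < 1 + u n := by
      filter_upwards [hu0.eventually (eventually_gt_nhds (show (-1:ℝ) < 0 by norm_num))]
        with n hn
      linarith
    have hlog : Tendsto (fun n => (l n : ℝ) * Real.log (1 + u n)) atTop (nhds L) := by
      have hg : Tendsto (fun n => glogAux (u n)) atTop (nhds 1) := glogAux_tendsto.comp hu0
      have h2 := hlu.mul hg
      rw [mul_one] at h2
      refine h2.congr fun n => ?_
      rw [glogAux_eq (u n)]
      ring
    have hexp : Tendsto (fun n => (1 + u n) ^ l n) atTop (nhds (Real.exp L)) := by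
      have h2 := Real.continuous_exp.continuousAt.tendsto.comp hlog
      refine Tendsto.congr' ?_ h2
      filter_upwards [hq_ev] with n hn
      simp only [Function.comp_apply]
      rw [← Real.log_pow, Real.exp_log (pow_pos hn _)]
    have hprod := hcouple.mul hexp
    rw [one_mul] at hprod
    refine hprod.congr fun n => ?_
    have hfac : (1 : ℝ) - F (tstar + t / l n) = (1 - F tstar) * (1 + u n) := by
      rw [hu]
      field_simp
      ring
    show (c n : ℝ) * (1 - F tstar) ^ l n * (1 + u n) ^ l n = (c n : ℝ) * pfun n
    rw [hpfun]
    simp only []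
    rw [hfac, mul_pow]
    ring
  have hmain := binom_poisson_limit (Real.exp (-(fstar / (1 - F tstar)) * t)) c pfun
    hc hp0 hp1 hlimit k
  refine Tendsto.congr (fun n => (key n).symm) hmain
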